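/- Let x be a 1-form on a finite connected graph G. For every x-minimal spanning tree T of G, the 1-form m(·,T) is a minimal form in F(x). -/

import Mathlib

open Classical Finset

/-- A (multi)graph given by oriented edges: each oriented edge `e` has a starting
vertex `head e` and an ending vertex `tail e`, and a reversal involution. -/
structure OGraph (V A : Type) where
  head : A → V
  tail : A → V
  rev : A → A
  rev_rev : ∀ e, rev (rev e) = e
  rev_ne : ∀ e, rev e ≠ e
  head_rev : ∀ e, head (rev e) = tail e

namespace OGraph

variable {V A : Type}

/-- `G.IsWalkFrom l u v` : the list of oriented edges `l` is a walk from `u` to `v`. -/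
def IsWalkFrom (G : OGraph V A) : List A → V → V → Prop
  | [], u, v => u = v
  | e :: l, u, v => G.head e = u ∧ G.IsWalkFrom l (G.tail e) v

def Connected (G : OGraph V A) : Prop := ∀ u v : V, ∃ l : List A, G.IsWalkFrom l u v

/-- A (vector-valued) 1-form on the graph. -/
def IsOneForm (G : OGraph V A) {d : ℕ} (b : A → Fin d → ℝ) : Prop :=
  ∀ e, b (G.rev e) = - b e

/-- `G.InF x b` : `b` is a 1-form with the same flux as `x` through every cycle
(equivalently, every closed walk); this is the set `F(x)`. -/
def InF (G : OGraph V A) {d : ℕ} (x b : A → Fin d → ℝ) : Prop :=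
  G.IsOneForm b ∧ ∀ (u : V) (l : List A), G.IsWalkFrom l u u →
    (l.map b).sum = (l.map x).sum

/-- A closed trail: a nonempty closed walk repeating no (unoriented) edge. -/
def IsClosedTrail (G : OGraph V A) (l : List A) (u : V) : Prop :=
  G.IsWalkFrom l u u ∧ l ≠ [] ∧ l.Pairwise (fun e f => e ≠ f ∧ e ≠ G.rev f)

/-- A spanning tree, as a set of oriented edges closed under reversal:
connected, spanning, and acyclic. -/
def IsSpanningTree (G : OGraph V A) (T : Set A) : Prop :=
  (∀ e ∈ T, G.rev e ∈ T) ∧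
  (∀ u v : V, ∃ l : List A, (∀ e ∈ l, e ∈ T) ∧ G.IsWalkFrom l u v) ∧
  ¬ ∃ (l : List A) (u : V), (∀ e ∈ l, e ∈ T) ∧ G.IsClosedTrail l u

/-- `c` is a fundamental cycle of the edge `e ∉ T` with respect to the spanning
tree `T` : a cycle through `e` all of whose other edges lie in `T`. -/
def FundCycle (G : OGraph V A) (T : Set A) (e : A) (c : List A) : Prop :=
  (∃ u, G.IsClosedTrail c u) ∧ e ∈ c ∧ ∀ f ∈ c, f ≠ e → f ∈ T

/-- `S` chooses one orientation of each edge not in `T`. -/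
def IsOrientation (G : OGraph V A) (T S : Set A) : Prop :=
  (∀ e ∈ S, e ∉ T) ∧ ∀ e, e ∉ T → (e ∈ S ↔ G.rev e ∉ S)

/-- The 1-form `m(·,T)` : zero on the tree and equal to the flux of `x` through
the fundamental cycle `c e` on each non-tree edge `e` (oriented via `S`). -/
noncomputable def mForm (G : OGraph V A) {d : ℕ} (x : A → Fin d → ℝ) (S : Set A)
    (c : A → List A) : A → Fin d → ℝ :=
  fun e => if e ∈ S then ((c e).map x).sum
    else if G.rev e ∈ S then - (((c (G.rev e)).map x).sum) else 0

/-- The number of oriented edges in the support of a 1-form. -/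
noncomputable def suppCard [Fintype A] {d : ℕ} (b : A → Fin d → ℝ) : ℕ :=
  (Finset.univ.filter (fun e => b e ≠ 0)).card

/-- Twice the number `β_T` of fundamental cycles of `T` with nonzero `x`-flux
(each non-tree unoriented edge is counted in both orientations). -/
noncomputable def badCount [Fintype A] {d : ℕ} (x : A → Fin d → ℝ) (T : Set A)
    (c : A → List A) : ℕ :=
  (Finset.univ.filter (fun e => e ∉ T ∧ ((c e).map x).sum ≠ 0)).card

/-- An `x`-minimal spanning tree: the number of fundamental cycles with nonzero
`x`-flux is minimal among all spanning trees. -/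
def IsMinTree [Fintype A] (G : OGraph V A) {d : ℕ} (x : A → Fin d → ℝ) (T : Set A) : Prop :=
  G.IsSpanningTree T ∧ ∃ c : A → List A, (∀ e, e ∉ T → G.FundCycle T e (c e)) ∧
    ∀ (T' : Set A) (c' : A → List A), G.IsSpanningTree T' →
      (∀ e, e ∉ T' → G.FundCycle T' e (c' e)) → badCount x T c ≤ badCount x T' c'

end OGraph

namespace OGraph

variable {V A : Type} {d : ℕ}

lemma tail_rev (G : OGraph V A) (e : A) : G.tail (G.rev e) = G.head e := by
  have h := G.head_rev (G.rev e)
  rw [G.rev_rev] at h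
  exact h.symm

lemma isWalkFrom_append (G : OGraph V A) {l₁ l₂ : List A} {u v : V} :
    G.IsWalkFrom (l₁ ++ l₂) u v ↔ ∃ w, G.IsWalkFrom l₁ u w ∧ G.IsWalkFrom l₂ w v := by
  induction l₁ generalizing u with
  | nil => simp [IsWalkFrom]
  | cons e t ih =>
    simp only [List.cons_append, IsWalkFrom, List.append_eq, ih]
    tauto

lemma IsWalkFrom.reverse {G : OGraph V A} {l : List A} {u v : V} (h : G.IsWalkFrom l u v) :
    G.IsWalkFrom (l.reverse.map G.rev) v u := by
  induction l generalizing u with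
  | nil => exact h.symm
  | cons e t ih =>
    obtain ⟨he, ht⟩ := h
    rw [List.reverse_cons, List.map_append]
    rw [G.isWalkFrom_append]
    exact ⟨G.tail e, ih ht, by simp [IsWalkFrom, G.head_rev, G.tail_rev, he]⟩

lemma sum_map_reverse_rev {G : OGraph V A} {y : A → Fin d → ℝ} (hy : G.IsOneForm y)
    (l : List A) : ((l.reverse.map G.rev).map y).sum = - (l.map y).sum := by
  induction l with
  | nil => simp
  | cons e t ih =>
    rw [List.reverse_cons, List.map_append, List.map_append, List.sum_append,
      List.map_cons, List.map_nil, List.map_cons, List.map_cons, List.sum_cons,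
      List.map_nil, List.sum_nil, ih, hy e, List.sum_cons]
    abel

end OGraph
namespace OGraph

variable {V A : Type} {d : ℕ}

/-- In a set of edges with no closed trail, every closed walk has zero flux. -/
lemma closed_walk_flux_zero {G : OGraph V A} {T : Set A}
    (hacyc : ¬ ∃ (l : List A) (u : V), (∀ e ∈ l, e ∈ T) ∧ G.IsClosedTrail l u)
    {y : A → Fin d → ℝ} (hy : G.IsOneForm y) :
    ∀ (n : ℕ) (l : List A), l.length ≤ n → ∀ u, (∀ e ∈ l, e ∈ T) →
      G.IsWalkFrom l u u → (l.map y).sum = 0 := by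
  intro n
  induction n with
  | zero =>
    intro l hl u _ _
    rw [Nat.le_zero, List.length_eq_zero_iff] at hl
    simp [hl]
  | succ n ih =>
    intro l hl u hlT hw
    rcases eq_or_ne l [] with rfl | hne
    · simp
    by_cases hp : l.Pairwise (fun e f => e ≠ f ∧ e ≠ G.rev f)
    · exact absurd ⟨l, u, hlT, hw, hne, hp⟩ hacyc
    rw [List.pairwise_iff_getElem] at hp
    push_neg at hp
    obtain ⟨i, j, hi, hj, hij, hbad⟩ := hp
    -- decompose l = p ++ e :: (q ++ f :: s)
    set e := l[i] with hei
    set f := l[j] with hfj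
    set p := l.take i with hp'
    set q := (l.drop (i+1)).take (j - i - 1) with hq'
    set s := l.drop (j+1) with hs'
    have hdecomp : l = p ++ e :: (q ++ f :: s) := by
      conv_lhs => rw [← List.take_append_drop i l]
      rw [List.drop_eq_getElem_cons hi]
      congr 1
      congr 1
      conv_lhs => rw [← List.take_append_drop (j - i - 1) (l.drop (i+1))]
      rw [List.drop_drop]
      have hji : i + 1 + (j - i - 1) = j := by omega
      rw [hji, List.drop_eq_getElem_cons hj]
    have hlen : l.length = p.length + 1 + q.length + 1 + s.length := by
      rw [hdecomp]; simp; omega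
    have hplen : p.length = i := by simp [hp']; omega
    have hqlen : q.length = j - i - 1 := by simp [hq']; omega
    -- extract walk structure
    rw [hdecomp, G.isWalkFrom_append] at hw
    obtain ⟨w₁, hwp, hwe, hwrest⟩ := hw
    rw [G.isWalkFrom_append] at hwrest
    obtain ⟨w₂, hwq, hwf, hws⟩ := hwrest
    -- edge membership
    have heT : e ∈ T := hlT e (by rw [hdecomp]; simp)
    have hpT : ∀ g ∈ p, g ∈ T := fun g hg => hlT g (by rw [hdecomp]; simp [hg])
    have hqT : ∀ g ∈ q, g ∈ T := fun g hg => hlT g (by rw [hdecomp]; simp [hg])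
    have hsT : ∀ g ∈ s, g ∈ T := fun g hg => hlT g (by rw [hdecomp]; simp [hg])
    have hsum : (l.map y).sum
        = (p.map y).sum + y e + (q.map y).sum + y f + (s.map y).sum := by
      rw [hdecomp]; simp; abel
    rcases eq_or_ne e f with hef | hne'
    · -- e = f
      have h1 : G.IsWalkFrom (e :: q) (G.head e) (G.head e) := by
        refine ⟨rfl, ?_⟩
        have hww : w₂ = G.head e := by rw [← hwf, ← hef]
        rwa [hww] at hwq
      have h2 : G.IsWalkFrom (p ++ e :: s) u u := by
        rw [G.isWalkFrom_append]
        refine ⟨w₁, hwp, hwe, ?_⟩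
        have htt : G.tail f = G.tail e := by rw [← hef]
        rwa [htt] at hws
      have e1 := ih (e :: q) (by simp; omega) (G.head e)
        (fun g hg => by
          rcases List.mem_cons.mp hg with h | h
          · exact h ▸ heT
          · exact hqT g h) h1
      have e2 := ih (p ++ e :: s) (by simp; omega) u
        (fun g hg => by
          rcases List.mem_append.mp hg with h | h
          · exact hpT g h
          · rcases List.mem_cons.mp h with h' | h'
            · exact h' ▸ heT
            · exact hsT g h') h2
      simp only [List.map_cons, List.sum_cons, List.map_append, List.sum_append] at e1 e2
      rw [hsum, ← hef]
      calc (p.map y).sum + y e + (q.map y).sum + y e + (s.map y).sum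
          = (y e + (q.map y).sum) + ((p.map y).sum + (y e + (s.map y).sum)) := by abel
        _ = 0 := by rw [e1, e2]; simp
    · -- e = rev f, i.e. f = rev e
      have hef : e = G.rev f := hbad hne'
      have hfe : f = G.rev e := by rw [hef, G.rev_rev]
      have hhf : G.head f = G.tail e := by rw [hfe, G.head_rev]
      have htf : G.tail f = G.head e := by rw [hfe, G.tail_rev]
      have h1 : G.IsWalkFrom q (G.tail e) (G.tail e) := by
        have hww : w₂ = G.tail e := by rw [← hwf, hhf]
        rwa [hww] at hwq
      have h2 : G.IsWalkFrom (p ++ s) u u := by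
        rw [G.isWalkFrom_append]
        refine ⟨w₁, hwp, ?_⟩
        rw [← hwe, ← htf]
        exact hws
      have e1 := ih q (by omega) (G.tail e) hqT h1
      have e2 := ih (p ++ s) (by simp; omega) u
        (fun g hg => by
          rcases List.mem_append.mp hg with h | h
          · exact hpT g h
          · exact hsT g h) h2
      simp only [List.map_append, List.sum_append] at e2
      rw [hsum, hfe, hy e, e1]
      calc (p.map y).sum + y e + 0 + -y e + (s.map y).sum
          = (p.map y).sum + (s.map y).sum := by abel
        _ = 0 := e2

lemma closed_walk_flux_zero' {G : OGraph V A} {T : Set A}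
    (hacyc : ¬ ∃ (l : List A) (u : V), (∀ e ∈ l, e ∈ T) ∧ G.IsClosedTrail l u)
    {y : A → Fin d → ℝ} (hy : G.IsOneForm y) {l : List A} {u : V}
    (hlT : ∀ e ∈ l, e ∈ T) (hw : G.IsWalkFrom l u u) : (l.map y).sum = 0 :=
  closed_walk_flux_zero hacyc hy l.length l le_rfl u hlT hw

end OGraph
namespace OGraph

variable {V A : Type} {d : ℕ}

section Theta

variable {G : OGraph V A} {T : Set A}

/-- The potential of `y` at `v` : flux of `y` along a chosen `T`-walk from `r` to `v`. -/
noncomputable def theta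
    (hspan : ∀ u v : V, ∃ l : List A, (∀ e ∈ l, e ∈ T) ∧ G.IsWalkFrom l u v)
    (y : A → Fin d → ℝ) (r v : V) : Fin d → ℝ :=
  ((Classical.choose (hspan r v)).map y).sum

/-- Flux along any `T`-walk is the difference of potentials. -/
lemma flux_eq_theta_sub
    (hrev : ∀ e ∈ T, G.rev e ∈ T)
    (hspan : ∀ u v : V, ∃ l : List A, (∀ e ∈ l, e ∈ T) ∧ G.IsWalkFrom l u v)
    (hacyc : ¬ ∃ (l : List A) (u : V), (∀ e ∈ l, e ∈ T) ∧ G.IsClosedTrail l u)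
    {y : A → Fin d → ℝ} (hy : G.IsOneForm y) (r : V) {l : List A} {u v : V}
    (hlT : ∀ e ∈ l, e ∈ T) (hw : G.IsWalkFrom l u v) :
    (l.map y).sum = theta hspan y r v - theta hspan y r u := by
  obtain ⟨hpT, hpw⟩ := Classical.choose_spec (hspan r u)
  obtain ⟨hqT, hqw⟩ := Classical.choose_spec (hspan r v)
  set pl := Classical.choose (hspan r u) with hpl
  set ql := Classical.choose (hspan r v) with hql
  have hcl : G.IsWalkFrom (pl ++ l ++ ql.reverse.map G.rev) r r := by
    rw [G.isWalkFrom_append]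
    exact ⟨v, (G.isWalkFrom_append).mpr ⟨u, hpw, hw⟩, hqw.reverse⟩
  have hclT : ∀ e ∈ pl ++ l ++ ql.reverse.map G.rev, e ∈ T := by
    intro g hg
    rcases List.mem_append.mp hg with h | h
    · rcases List.mem_append.mp h with h | h
      · exact hpT g h
      · exact hlT g h
    · obtain ⟨a, ha, rfl⟩ := List.mem_map.mp h
      exact hrev a (hqT a (List.mem_reverse.mp ha))
  have h0 := closed_walk_flux_zero' hacyc hy hclT hcl
  rw [List.map_append, List.map_append, List.sum_append, List.sum_append,
    sum_map_reverse_rev hy] at h0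
  rw [theta, theta, ← hpl, ← hql]
  have : (pl.map y).sum + (l.map y).sum = (ql.map y).sum := by
    have := congrArg (· + (ql.map y).sum) h0
    simpa using this
  rw [← this]; abel

/-- The defect of `y` on an edge, with respect to the tree potential. -/
noncomputable def delta
    (hspan : ∀ u v : V, ∃ l : List A, (∀ e ∈ l, e ∈ T) ∧ G.IsWalkFrom l u v)
    (y : A → Fin d → ℝ) (r : V) (e : A) : Fin d → ℝ :=
  y e - (theta hspan y r (G.tail e) - theta hspan y r (G.head e))

lemma delta_eq_zero_of_mem
    (hrev : ∀ e ∈ T, G.rev e ∈ T)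
    (hspan : ∀ u v : V, ∃ l : List A, (∀ e ∈ l, e ∈ T) ∧ G.IsWalkFrom l u v)
    (hacyc : ¬ ∃ (l : List A) (u : V), (∀ e ∈ l, e ∈ T) ∧ G.IsClosedTrail l u)
    {y : A → Fin d → ℝ} (hy : G.IsOneForm y) (r : V) {e : A} (he : e ∈ T) :
    delta hspan y r e = 0 := by
  have hw : G.IsWalkFrom [e] (G.head e) (G.tail e) := ⟨rfl, rfl⟩
  have := flux_eq_theta_sub hrev hspan hacyc hy r
    (l := [e]) (by simpa using he) hw
  simp only [List.map_cons, List.map_nil, List.sum_cons, List.sum_nil, add_zero] at this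
  rw [delta, this]; abel

lemma delta_rev
    (hspan : ∀ u v : V, ∃ l : List A, (∀ e ∈ l, e ∈ T) ∧ G.IsWalkFrom l u v)
    {y : A → Fin d → ℝ} (hy : G.IsOneForm y) (r : V) (e : A) :
    delta hspan y r (G.rev e) = - delta hspan y r e := by
  rw [delta, delta, hy e, G.tail_rev, G.head_rev]; abel

/-- Flux of any walk equals potential difference plus the sum of defects. -/
lemma flux_eq_theta_add_delta
    (hspan : ∀ u v : V, ∃ l : List A, (∀ e ∈ l, e ∈ T) ∧ G.IsWalkFrom l u v)
    (y : A → Fin d → ℝ) (r : V) :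
    ∀ (l : List A) (u v : V), G.IsWalkFrom l u v →
    (l.map y).sum = (theta hspan y r v - theta hspan y r u)
      + (l.map (delta hspan y r)).sum := by
  intro l
  induction l with
  | nil =>
    intro u v hw
    cases hw
    simp
  | cons e t ih =>
    intro u v hw
    obtain ⟨he, ht⟩ := hw
    rw [List.map_cons, List.sum_cons, List.map_cons, List.sum_cons, ih _ _ ht, ← he, delta]
    abel

/-- The flux of any 1-form through a fundamental cycle is the defect on its edge. -/
lemma fundCycle_flux
    (hrev : ∀ e ∈ T, G.rev e ∈ T)
    (hspan : ∀ u v : V, ∃ l : List A, (∀ e ∈ l, e ∈ T) ∧ G.IsWalkFrom l u v)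
    (hacyc : ¬ ∃ (l : List A) (u : V), (∀ e ∈ l, e ∈ T) ∧ G.IsClosedTrail l u)
    {y : A → Fin d → ℝ} (hy : G.IsOneForm y) (r : V) {e : A} {cy : List A}
    (hfc : G.FundCycle T e cy) :
    (cy.map y).sum = delta hspan y r e := by
  obtain ⟨⟨u, hwalk, hne, hpair⟩, hmem, hother⟩ := hfc
  have hflux := flux_eq_theta_add_delta hspan y r cy u u hwalk
  rw [sub_self, zero_add] at hflux
  rw [hflux]
  -- all defects vanish except on e, which occurs once
  have hnd : cy.Nodup := hpair.imp (fun h => h.1)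
  clear hflux hwalk hne hpair
  induction cy with
  | nil => exact absurd hmem List.not_mem_nil
  | cons a t iht =>
    rw [List.map_cons, List.sum_cons]
    rcases eq_or_ne a e with rfl | hae
    · have hent : a ∉ t := (List.nodup_cons.mp hnd).1
      have ht0 : (t.map (delta hspan y r)).sum = 0 := by
        apply List.sum_eq_zero
        intro z hz
        obtain ⟨g, hg, rfl⟩ := List.mem_map.mp hz
        exact delta_eq_zero_of_mem hrev hspan hacyc hy r
          (hother g (List.mem_cons_of_mem a hg) (fun h => hent (h ▸ hg)))
      rw [ht0, add_zero]
    · have ha0 : delta hspan y r a = 0 :=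
        delta_eq_zero_of_mem hrev hspan hacyc hy r
          (hother a List.mem_cons_self hae)
      have hmt : e ∈ t := by
        rcases List.mem_cons.mp hmem with h | h
        · exact absurd h.symm hae
        · exact h
      rw [ha0, zero_add]
      exact iht hmt (fun g hg hge => hother g (List.mem_cons_of_mem a hg) hge)
        (List.nodup_cons.mp hnd).2

end Theta

end OGraph
namespace OGraph

variable {V A : Type} {d : ℕ}

lemma IsClosedTrail.reverse {G : OGraph V A} {l : List A} {u : V}
    (h : G.IsClosedTrail l u) : G.IsClosedTrail (l.reverse.map G.rev) u := by
  obtain ⟨hw, hne, hp⟩ := h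
  refine ⟨hw.reverse, by simpa using hne, ?_⟩
  rw [List.pairwise_map, List.pairwise_reverse]
  refine hp.imp ?_
  intro a b hab
  constructor
  · intro h
    exact hab.1 (by rw [← G.rev_rev a, ← h, G.rev_rev])
  · rw [G.rev_rev]
    intro h
    exact hab.2 h.symm

lemma rev_not_mem_of_trail {G : OGraph V A} {l : List A}
    (hp : l.Pairwise (fun e f => e ≠ f ∧ e ≠ G.rev f)) {e : A} (he : e ∈ l) :
    G.rev e ∉ l := by
  induction l with
  | nil => simp
  | cons a t ih =>
    rw [List.pairwise_cons] at hp
    obtain ⟨ha, hp'⟩ := hp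
    rcases List.mem_cons.mp he with rfl | he'
    · intro hmem
      rcases List.mem_cons.mp hmem with h | h
      · exact G.rev_ne e h
      · exact (ha _ h).2 (G.rev_rev e).symm
    · intro hmem
      rcases List.mem_cons.mp hmem with h | h
      · exact (ha e he').2 h.symm
      · exact ih hp' he' h

/-- From a closed trail using edges of `P ∪ {e, rev e}` and actually using `e` or
`rev e`, we get a fundamental cycle of `e` with respect to `P`. -/
lemma exists_fundCycle_of_trail {G : OGraph V A} {P : Set A} {e : A}
    (hrevP : ∀ f ∈ P, G.rev f ∈ P) :
    ∀ (l : List A) (u : V), (∀ f ∈ l, f ∈ P ∨ f = e ∨ f = G.rev e) →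
      G.IsClosedTrail l u → (e ∈ l ∨ G.rev e ∈ l) → ∃ cc, G.FundCycle P e cc := by
  have aux : ∀ (l : List A) (u : V), (∀ f ∈ l, f ∈ P ∨ f = e ∨ f = G.rev e) →
      G.IsClosedTrail l u → e ∈ l → ∃ cc, G.FundCycle P e cc := by
    intro l u hmem htrail hel
    refine ⟨l, ⟨u, htrail⟩, hel, ?_⟩
    intro f hf hfe
    rcases hmem f hf with h | h | h
    · exact h
    · exact absurd h hfe
    · exfalso
      exact rev_not_mem_of_trail htrail.2.2 hel (h ▸ hf)
  intro l u hmem htrail hin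
  rcases hin with hel | hrel
  · exact aux l u hmem htrail hel
  · refine aux (l.reverse.map G.rev) u ?_ htrail.reverse ?_
    · intro f hf
      obtain ⟨g, hg, rfl⟩ := List.mem_map.mp hf
      rcases hmem g (List.mem_reverse.mp hg) with h | h | h
      · exact Or.inl (hrevP g h)
      · exact Or.inr (Or.inr (by rw [h]))
      · exact Or.inr (Or.inl (by rw [h, G.rev_rev]))
    · rw [List.mem_map]
      exact ⟨G.rev e, List.mem_reverse.mpr hrel, G.rev_rev e⟩

/-- From a fundamental cycle of `e` w.r.t. `P` we extract `P`-walks between the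
endpoints of `e`, in both directions. -/
lemma fundCycle_exists_walk {G : OGraph V A} {P : Set A} {e : A}
    (hrevP : ∀ f ∈ P, G.rev f ∈ P) {cc : List A} (hfc : G.FundCycle P e cc) :
    (∃ w, (∀ f ∈ w, f ∈ P) ∧ G.IsWalkFrom w (G.tail e) (G.head e)) ∧
    (∃ w, (∀ f ∈ w, f ∈ P) ∧ G.IsWalkFrom w (G.head e) (G.tail e)) := by
  obtain ⟨⟨u, hwalk, hne, hpair⟩, hmem, hother⟩ := hfc
  obtain ⟨p, q, rfl⟩ := List.append_of_mem hmem
  have hnd : (p ++ e :: q).Nodup := hpair.imp (fun h => h.1)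
  have hep : e ∉ p := by
    intro h
    exact (List.disjoint_of_nodup_append hnd) h List.mem_cons_self
  have heq : e ∉ q := by
    have := (List.nodup_append.mp hnd).2.1
    exact (List.nodup_cons.mp this).1
  have hpP : ∀ f ∈ p, f ∈ P := fun f hf =>
    hother f (List.mem_append_left _ hf) (fun h => hep (h ▸ hf))
  have hqP : ∀ f ∈ q, f ∈ P := fun f hf =>
    hother f (List.mem_append_right _ (List.mem_cons_of_mem e hf)) (fun h => heq (h ▸ hf))
  rw [G.isWalkFrom_append] at hwalk
  obtain ⟨w₁, hwp, hwe, hwq⟩ := hwalk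
  have hfor : G.IsWalkFrom (q ++ p) (G.tail e) (G.head e) := by
    rw [G.isWalkFrom_append]
    exact ⟨u, hwq, hwe ▸ hwp⟩
  have hforP : ∀ f ∈ q ++ p, f ∈ P := by
    intro f hf
    rcases List.mem_append.mp hf with h | h
    · exact hqP f h
    · exact hpP f h
  refine ⟨⟨q ++ p, hforP, hfor⟩, ⟨(q ++ p).reverse.map G.rev, ?_, hfor.reverse⟩⟩
  intro f hf
  obtain ⟨g, hg, rfl⟩ := List.mem_map.mp hf
  exact hrevP g (hforP g (List.mem_reverse.mp hg))

/-- The main construction: a spanning tree adapted to the support of `b`. -/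
lemma exists_good_tree {G : OGraph V A} [Finite A] (hG : G.Connected)
    {b : A → Fin d → ℝ} (hb : G.IsOneForm b) :
    ∃ (T' : Set A) (c' : A → List A), G.IsSpanningTree T' ∧
      (∀ e, e ∉ T' → G.FundCycle T' e (c' e)) ∧
      (∀ e, e ∉ T' → b e = 0 → ((c' e).map b).sum = 0) := by
  classical
  set Z : Set A := {e | b e = 0} with hZ
  have hZrev : ∀ e ∈ Z, G.rev e ∈ Z := by
    intro e he
    simp only [hZ, Set.mem_setOf_eq] at he ⊢
    rw [hb e, he, neg_zero]
  set Acyc : Set A → Prop :=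
    fun P => ¬ ∃ (l : List A) (u : V), (∀ e ∈ l, e ∈ P) ∧ G.IsClosedTrail l u with hAcyc
  have hAcycMono : ∀ {P Q : Set A}, P ⊆ Q → Acyc Q → Acyc P := by
    intro P Q hPQ hQ ⟨l, u, hl, ht⟩
    exact hQ ⟨l, u, fun e he => hPQ (hl e he), ht⟩
  have hAcycEmpty : Acyc ∅ := by
    rintro ⟨l, u, hl, ht⟩
    rcases l with _ | ⟨a, t⟩
    · exact ht.2.1 rfl
    · exact hl a List.mem_cons_self
  -- maximal rev-closed acyclic subset of Z
  obtain ⟨F, hFmem, hFmax⟩ := Set.Finite.exists_maximal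
    (s := {P : Set A | P ⊆ Z ∧ (∀ e ∈ P, G.rev e ∈ P) ∧ Acyc P}) (Set.toFinite _)
    ⟨∅, Set.empty_subset _, fun e he => absurd he (Set.notMem_empty e), hAcycEmpty⟩
  replace hFmax : ∀ P ∈ {P : Set A | P ⊆ Z ∧ (∀ e ∈ P, G.rev e ∈ P) ∧ Acyc P},
      id F ≤ id P → id F = id P := fun P hP h => le_antisymm h (hFmax hP h)
  obtain ⟨hFZ, hFrev, hFacyc⟩ := hFmem
  -- maximal rev-closed acyclic superset of F
  obtain ⟨T', hTmem, hTmax⟩ := Set.Finite.exists_maximal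
    (s := {P : Set A | F ⊆ P ∧ (∀ e ∈ P, G.rev e ∈ P) ∧ Acyc P}) (Set.toFinite _)
    ⟨F, le_refl F, hFrev, hFacyc⟩
  replace hTmax : ∀ P ∈ {P : Set A | F ⊆ P ∧ (∀ e ∈ P, G.rev e ∈ P) ∧ Acyc P},
      id T' ≤ id P → id T' = id P := fun P hP h => le_antisymm h (hTmax hP h)
  obtain ⟨hFT, hTrev, hTacyc⟩ := hTmem
  -- every non-tree edge has a fundamental cycle w.r.t. T'
  have hfund : ∀ e, e ∉ T' → ∃ cc, G.FundCycle T' e cc := by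
    intro e he
    have hre : G.rev e ∉ T' := fun h => he (by rw [← G.rev_rev e]; exact hTrev _ h)
    have hnot : ¬ Acyc (T' ∪ {e, G.rev e}) := by
      intro hac
      have hmem' : T' ∪ {e, G.rev e} ∈
          {P : Set A | F ⊆ P ∧ (∀ f ∈ P, G.rev f ∈ P) ∧ Acyc P} := by
        refine ⟨hFT.trans (Set.subset_union_left), ?_, hac⟩
        intro f hf
        rcases hf with hf | hf
        · exact Or.inl (hTrev f hf)
        · rcases hf with rfl | hf
          · exact Or.inr (Or.inr rfl)
          · rcases hf with rfl
            rw [G.rev_rev]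
            exact Or.inr (Or.inl rfl)
      have hle : T' ⊆ T' ∪ {e, G.rev e} := Set.subset_union_left
      have := hTmax _ hmem' hle
      simp only [id] at this
      exact he (this ▸ (Or.inr (Or.inl rfl) : e ∈ T' ∪ {e, G.rev e}))
    simp only [hAcyc, not_not] at hnot
    obtain ⟨l, u, hl, ht⟩ := hnot
    refine exists_fundCycle_of_trail hTrev l u ?_ ht ?_
    · intro f hf
      rcases hl f hf with h | h
      · exact Or.inl h
      · rcases h with rfl | h
        · exact Or.inr (Or.inl rfl)
        · exact Or.inr (Or.inr h)
    · by_contra hcon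
      push_neg at hcon
      apply hTacyc
      refine ⟨l, u, ?_, ht⟩
      intro f hf
      rcases hl f hf with h | h
      · exact h
      · rcases h with rfl | h
        · exact absurd hf hcon.1
        · rcases h with rfl
          exact absurd hf hcon.2
  choose cc hcc using hfund
  set c' : A → List A := fun e => if h : e ∉ T' then cc e h else [] with hc'
  have hc'fund : ∀ e, e ∉ T' → G.FundCycle T' e (c' e) := by
    intro e he
    simp only [hc', dif_pos he]
    exact hcc e he
  -- spanning
  have hspan : ∀ u v : V, ∃ l : List A, (∀ f ∈ l, f ∈ T') ∧ G.IsWalkFrom l u v := by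
    intro u v
    obtain ⟨l, hl⟩ := hG u v
    induction l generalizing u with
    | nil => exact ⟨[], by simp, hl⟩
    | cons a t ih =>
      obtain ⟨ha, ht⟩ := hl
      obtain ⟨w, hwT, hww⟩ := ih _ ht
      by_cases haT : a ∈ T'
      · refine ⟨a :: w, ?_, ha, hww⟩
        intro f hf
        rcases List.mem_cons.mp hf with rfl | hf
        · exact haT
        · exact hwT f hf
      · obtain ⟨w', hw'T, hw'w⟩ := (fundCycle_exists_walk hTrev (hc'fund a haT)).2
        refine ⟨w' ++ w, ?_, ?_⟩
        · intro f hf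
          rcases List.mem_append.mp hf with h | h
          · exact hw'T f h
          · exact hwT f h
        · rw [G.isWalkFrom_append]
          exact ⟨G.tail a, ha ▸ hw'w, hww⟩
  refine ⟨T', c', ⟨hTrev, hspan, hTacyc⟩, hc'fund, ?_⟩
  -- the flux property
  intro e he hbe
  -- V is nonempty since the cycle c' e is a nonempty walk
  have hfc := hc'fund e he
  obtain ⟨⟨u, hwalk, hne, hpair⟩, hmem, hother⟩ := hfc
  haveI : Nonempty V := ⟨u⟩
  set r : V := Classical.arbitrary V with hr
  rw [fundCycle_flux hTrev hspan hTacyc hb r (hc'fund e he)]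
  -- delta of b at e vanishes since e joins two vertices connected inside F ⊆ Z
  have hre : G.rev e ∉ T' := fun h => he (by rw [← G.rev_rev e]; exact hTrev _ h)
  have heZ : e ∈ Z := hbe
  have hreZ : G.rev e ∈ Z := hZrev e heZ
  have heF : e ∉ F := fun h => he (hFT h)
  have hreF : G.rev e ∉ F := fun h => hre (hFT h)
  have hnotF : ¬ Acyc (F ∪ {e, G.rev e}) := by
    intro hac
    have hmem' : F ∪ {e, G.rev e} ∈ {P : Set A | P ⊆ Z ∧ (∀ f ∈ P, G.rev f ∈ P) ∧ Acyc P} := by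
      refine ⟨?_, ?_, hac⟩
      · intro f hf
        rcases hf with hf | hf
        · exact hFZ hf
        · rcases hf with rfl | hf
          · exact heZ
          · rcases hf with rfl
            exact hreZ
      · intro f hf
        rcases hf with hf | hf
        · exact Or.inl (hFrev f hf)
        · rcases hf with rfl | hf
          · exact Or.inr (Or.inr rfl)
          · rcases hf with rfl
            rw [G.rev_rev]
            exact Or.inr (Or.inl rfl)
    have hle : F ⊆ F ∪ {e, G.rev e} := Set.subset_union_left
    have := hFmax _ hmem' hle
    simp only [id] at this
    exact heF (this ▸ (Or.inr (Or.inl rfl) : e ∈ F ∪ {e, G.rev e}))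
  simp only [hAcyc, not_not] at hnotF
  obtain ⟨l, u₂, hl, ht⟩ := hnotF
  have hFacyc' := hFacyc
  obtain ⟨ccF, hccF⟩ := exists_fundCycle_of_trail hFrev l u₂
    (fun f hf => by
      rcases hl f hf with h | h
      · exact Or.inl h
      · rcases h with rfl | h
        · exact Or.inr (Or.inl rfl)
        · exact Or.inr (Or.inr h)) ht
    (by
      by_contra hcon
      push_neg at hcon
      apply hFacyc
      refine ⟨l, u₂, ?_, ht⟩
      intro f hf
      rcases hl f hf with h | h
      · exact h
      · rcases h with rfl | h
        · exact absurd hf hcon.1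
        · rcases h with rfl
          exact absurd hf hcon.2)
  obtain ⟨wF, hwFF, hwFw⟩ := (fundCycle_exists_walk hFrev hccF).2
  -- wF : walk from head e to tail e inside F
  have hwFT : ∀ f ∈ wF, f ∈ T' := fun f hf => hFT (hwFF f hf)
  have hth := flux_eq_theta_sub hTrev hspan hTacyc hb r hwFT hwFw
  have hwF0 : ((wF.map b).sum : Fin d → ℝ) = 0 := by
    apply List.sum_eq_zero
    intro z hz
    obtain ⟨g, hg, rfl⟩ := List.mem_map.mp hz
    exact hFZ (hwFF g hg)
  rw [hwF0] at hth
  rw [delta, hbe, ← hth]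
  simp

end OGraph
/-- Let `x` be a 1-form on a finite connected graph `G`. For
every `x`-minimal spanning tree `T` of `G` (with fundamental cycles `c` and an
orientation choice `S`), the 1-form `m(·,T)` is a minimal form in `F(x)`. -/
theorem mForm_of_minTree_is_minimal {V A : Type} [Fintype V] [Fintype A] {d : ℕ}
    (G : OGraph V A) (hG : G.Connected)
    (x : A → Fin d → ℝ) (hx : G.IsOneForm x)
    (T S : Set A) (c : A → List A)
    (hT : G.IsMinTree x T) (hS : G.IsOrientation T S)
    (hc : ∀ e ∈ S, G.FundCycle T e (c e)) :
    G.InF x (G.mForm x S c) ∧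
    ∀ b : A → Fin d → ℝ, G.InF x b →
      OGraph.suppCard (G.mForm x S c) ≤ OGraph.suppCard b := by
  classical
  rcases isEmpty_or_nonempty V with hV | hV
  · haveI : IsEmpty A := ⟨fun e => IsEmpty.false (G.head e)⟩
    refine ⟨⟨fun e => isEmptyElim e, fun u => isEmptyElim u⟩, ?_⟩
    intro b hb
    simp [OGraph.suppCard]
  obtain ⟨hTtree, c₀, hc₀, hmin⟩ := hT
  obtain ⟨hTrev, hTspan, hTacyc⟩ := hTtree
  set r : V := Classical.arbitrary V with hr
  have hme : ∀ e, G.mForm x S c e = OGraph.delta hTspan x r e := by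
    intro e
    by_cases heT : e ∈ T
    · have heS : e ∉ S := fun h => (hS.1 e h) heT
      have hreS : G.rev e ∉ S := fun h => (hS.1 _ h) (hTrev e heT)
      simp only [OGraph.mForm, if_neg heS, if_neg hreS]
      exact (OGraph.delta_eq_zero_of_mem hTrev hTspan hTacyc hx r heT).symm
    · by_cases heS : e ∈ S
      · simp only [OGraph.mForm, if_pos heS]
        exact OGraph.fundCycle_flux hTrev hTspan hTacyc hx r (hc e heS)
      · have hreS : G.rev e ∈ S := by
          by_contra h
          exact heS ((hS.2 e heT).mpr h)
        simp only [OGraph.mForm, if_neg heS, if_pos hreS]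
        rw [OGraph.fundCycle_flux hTrev hTspan hTacyc hx r (hc _ hreS),
          OGraph.delta_rev hTspan hx r e, neg_neg]
  have hmf : G.mForm x S c = fun e => OGraph.delta hTspan x r e := funext hme
  constructor
  · constructor
    · intro e
      rw [hmf]
      simp only
      rw [OGraph.delta_rev hTspan hx r e]
    · intro u l hw
      have h1 : (l.map (G.mForm x S c)).sum = (l.map (OGraph.delta hTspan x r)).sum := by
        rw [hmf]
      rw [h1, OGraph.flux_eq_theta_add_delta hTspan x r l u u hw]
      simp
  · intro b hb
    have h2a : OGraph.suppCard (G.mForm x S c) = OGraph.badCount x T c₀ := by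
      unfold OGraph.suppCard OGraph.badCount
      have hiff : ∀ e ∈ (Finset.univ : Finset A),
          (G.mForm x S c e ≠ 0) ↔ (e ∉ T ∧ ((c₀ e).map x).sum ≠ 0) := by
        intro e _
        rw [hme e]
        constructor
        · intro h
          have heT : e ∉ T := fun hT' =>
            h (OGraph.delta_eq_zero_of_mem hTrev hTspan hTacyc hx r hT')
          refine ⟨heT, ?_⟩
          rwa [OGraph.fundCycle_flux hTrev hTspan hTacyc hx r (hc₀ e heT)]
        · rintro ⟨heT, h⟩
          rwa [OGraph.fundCycle_flux hTrev hTspan hTacyc hx r (hc₀ e heT)] at h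
      rw [Finset.filter_congr hiff]
    obtain ⟨T', c', hT'tree, hT'fund, hT'good⟩ := OGraph.exists_good_tree hG hb.1
    have h2b := hmin T' c' hT'tree hT'fund
    have h2c : OGraph.badCount x T' c' ≤ OGraph.suppCard b := by
      unfold OGraph.suppCard OGraph.badCount
      apply Finset.card_le_card
      intro e he
      simp only [Finset.mem_filter, Finset.mem_univ, true_and] at he ⊢
      obtain ⟨heT', hflux⟩ := he
      intro hbe
      apply hflux
      obtain ⟨u, hwalk⟩ := (hT'fund e heT').1
      have hfb : ((c' e).map b).sum = ((c' e).map x).sum := hb.2 u (c' e) hwalk.1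
      rw [← hfb]
      exact hT'good e heT' hbe
    rw [h2a]
    exact le_trans h2b h2c
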